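/- Let C = Ψ̄_k^{−1}(C_1,…,C_{2^k}), where C_1,…,C_{2^k} are F_{p^r}-linear codes of length n. Then C is a Euclidean self-dual code over B_k if and only if C_1,…,C_{2^k} are all Euclidean self-dual codes over F_{p^r}. -/

import Mathlib

open MvPolynomial

set_option synthInstance.maxHeartbeats 400000
set_option maxHeartbeats 1000000

noncomputable def relIdeal (p r k : ℕ) [Fact p.Prime] : Ideal (MvPolynomial (Fin k) (GaloisField p r)) :=
  Ideal.span (Set.range fun i : Fin k => X i ^ 2 - X i)

abbrev B (p r k : ℕ) [Fact p.Prime] :=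
  MvPolynomial (Fin k) (GaloisField p r) ⧸ relIdeal p r k

noncomputable def v (p r k : ℕ) [Fact p.Prime] (i : Fin k) : B p r k :=
  Ideal.Quotient.mk _ (X i)

lemma v_idem (p r k : ℕ) [Fact p.Prime] (i : Fin k) : v p r k i ^ 2 = v p r k i := by
  have h : (X i ^ 2 - X i : MvPolynomial (Fin k) (GaloisField p r)) ∈ relIdeal p r k :=
    Ideal.subset_span ⟨i, rfl⟩
  have h2 := (Ideal.Quotient.eq_zero_iff_mem).mpr h
  rw [map_sub, map_pow] at h2
  have h3 := sub_eq_zero.mp h2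
  simpa [v] using h3

lemma one_sub_v_idem (p r k : ℕ) [Fact p.Prime] (i : Fin k) :
    (1 - v p r k i) ^ 2 = 1 - v p r k i := by
  have h : (1 - v p r k i) ^ 2 = 1 - 2 * v p r k i + v p r k i ^ 2 := by ring
  rw [h, v_idem]; ring

noncomputable def ThAux (p r k : ℕ) [Fact p.Prime] (S : Finset (Fin k)) :
    MvPolynomial (Fin k) (GaloisField p r) →+* B p r k :=
  (aeval (fun i : Fin k => if i ∈ S then 1 - v p r k i else v p r k i)).toRingHom

lemma ThAux_cond (p r k : ℕ) [Fact p.Prime] (S : Finset (Fin k)) :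
    relIdeal p r k ≤ RingHom.ker (ThAux p r k S) := by
  refine Ideal.span_le.mpr ?_
  rintro _ ⟨i, rfl⟩
  simp only [SetLike.mem_coe, RingHom.mem_ker, ThAux, AlgHom.toRingHom_eq_coe,
    RingHom.coe_coe, map_sub, map_pow, aeval_X]
  by_cases h : i ∈ S
  · rw [if_pos h, one_sub_v_idem, sub_self]
  · rw [if_neg h, v_idem, sub_self]

/-- The automorphism `Θ_S` of `B_k`, determined by `v_i ↦ 1 - v_i` for `i ∈ S` and
`v_i ↦ v_i` otherwise, fixing `F_{p^r}` pointwise. -/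
noncomputable def Th (p r k : ℕ) [Fact p.Prime] (S : Finset (Fin k)) :
    B p r k →+* B p r k :=
  Ideal.Quotient.lift (relIdeal p r k) (ThAux p r k S) (fun _ ha => ThAux_cond p r k S ha)

noncomputable def LamAux (p r k : ℕ) [Fact p.Prime] (π : Equiv.Perm (Fin k)) (t : ℕ) :
    MvPolynomial (Fin k) (GaloisField p r) →+* B p r k :=
  eval₂Hom ((Ideal.Quotient.mk (relIdeal p r k)).comp
      ((C : GaloisField p r →+* MvPolynomial (Fin k) (GaloisField p r)).comp
        (iterateFrobenius (GaloisField p r) p t)))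
    (fun i => v p r k (π i))

lemma LamAux_cond (p r k : ℕ) [Fact p.Prime] (π : Equiv.Perm (Fin k)) (t : ℕ) :
    relIdeal p r k ≤ RingHom.ker (LamAux p r k π t) := by
  refine Ideal.span_le.mpr ?_
  rintro _ ⟨i, rfl⟩
  simp only [SetLike.mem_coe, RingHom.mem_ker, LamAux, map_sub, map_pow, eval₂Hom_X']
  rw [v_idem, sub_self]

/-- The automorphism `Λ_{π,t}` of `B_k`, acting on `F_{p^r}` as the Frobenius power
`α ↦ α^{p^t}` and sending `v_i ↦ v_{π(i)}`. -/
noncomputable def Lam (p r k : ℕ) [Fact p.Prime] (π : Equiv.Perm (Fin k)) (t : ℕ) :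
    B p r k →+* B p r k :=
  Ideal.Quotient.lift (relIdeal p r k) (LamAux p r k π t) (fun _ ha => LamAux_cond p r k π t ha)

noncomputable def PhiAux (p r k : ℕ) [Fact p.Prime] :
    MvPolynomial (Fin k) (GaloisField p r) →+* (Fin (2 ^ k) → GaloisField p r) :=
  Pi.ringHom fun j =>
    eval₂Hom (RingHom.id (GaloisField p r))
      (fun i : Fin k => if Nat.testBit (j : ℕ) (i : ℕ) then 1 else 0)

lemma PhiAux_cond (p r k : ℕ) [Fact p.Prime] :
    relIdeal p r k ≤ RingHom.ker (PhiAux p r k) := by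
  refine Ideal.span_le.mpr ?_
  rintro _ ⟨i, rfl⟩
  simp only [SetLike.mem_coe, RingHom.mem_ker, PhiAux]
  funext j
  simp only [Pi.ringHom, RingHom.pi_apply, map_sub, map_pow, eval₂Hom_X']
  by_cases h : Nat.testBit (j : ℕ) (i : ℕ) <;> simp [h]

/-- The Gray map `Φ_k : B_k → F_{p^r}^{2^k}`: the coordinate indexed by `j` is the
evaluation of (a representative of) an element of `B_k` at the point whose `i`-th
coordinate is the `i`-th binary digit of `j`.  This agrees with the recursive
definition `Φ_k(α + β v_k) = (Φ_{k-1}(α), Φ_{k-1}(α + β))`, `Φ_0 = id`. -/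
noncomputable def Phi (p r k : ℕ) [Fact p.Prime] :
    B p r k →+* (Fin (2 ^ k) → GaloisField p r) :=
  Ideal.Quotient.lift (relIdeal p r k) (PhiAux p r k) (fun _ ha => PhiAux_cond p r k ha)



noncomputable def ee (p r k : ℕ) [Fact p.Prime] (j : Fin (2 ^ k)) : B p r k :=
  ∏ i : Fin k, if Nat.testBit (j : ℕ) (i : ℕ) then v p r k i else 1 - v p r k i

lemma v_mul_ee (p r k : ℕ) [Fact p.Prime] (i : Fin k) (j : Fin (2 ^ k)) :
    v p r k i * ee p r k j =
      (if Nat.testBit (j : ℕ) (i : ℕ) then (1 : B p r k) else 0) * ee p r k j := by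
  unfold ee
  rw [← Finset.mul_prod_erase Finset.univ _ (Finset.mem_univ i), ← mul_assoc, ← mul_assoc]
  congr 1
  have hv : v p r k i * v p r k i = v p r k i := by
    rw [← pow_two]; exact v_idem p r k i
  by_cases h : Nat.testBit (j : ℕ) (i : ℕ)
  · simp only [if_pos h, one_mul]; exact hv
  · simp only [if_neg h, zero_mul, mul_sub, mul_one, hv, sub_self]

lemma bits_inj (p r k : ℕ) [Fact p.Prime] {j j' : Fin (2 ^ k)}
    (h : ∀ i : Fin k, Nat.testBit (j : ℕ) (i : ℕ) = Nat.testBit (j' : ℕ) (i : ℕ)) :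
    j = j' := by
  apply Fin.ext
  apply Nat.eq_of_testBit_eq
  intro i
  by_cases hik : i < k
  · exact h ⟨i, hik⟩
  · have h1 : (j : ℕ) < 2 ^ i := lt_of_lt_of_le j.isLt (Nat.pow_le_pow_right (by norm_num) (le_of_not_gt hik))
    have h2 : (j' : ℕ) < 2 ^ i := lt_of_lt_of_le j'.isLt (Nat.pow_le_pow_right (by norm_num) (le_of_not_gt hik))
    rw [Nat.testBit_eq_false_of_lt h1, Nat.testBit_eq_false_of_lt h2]

lemma sum_ee (p r k : ℕ) [Fact p.Prime] : ∑ j, ee p r k j = 1 := by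
  classical
  have hbij : Function.Bijective
      (fun (j : Fin (2 ^ k)) (i : Fin k) => Nat.testBit (j : ℕ) (i : ℕ)) := by
    rw [Fintype.bijective_iff_injective_and_card]
    constructor
    · intro j j' h
      exact bits_inj p r k (fun i => congrFun h i)
    · simp [Fintype.card_fun]
  have h1 : ∑ j, ee p r k j =
      ∑ s : Fin k → Bool, ∏ i : Fin k, (if s i then v p r k i else 1 - v p r k i) :=
    Fintype.sum_bijective _ hbij _ _ (fun j => rfl)
  rw [h1]
  have h2 : ∑ s : Fin k → Bool, ∏ i : Fin k, (if s i then v p r k i else 1 - v p r k i)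
      = ∏ i : Fin k, ∑ b : Bool, (if b then v p r k i else 1 - v p r k i) := by
    rw [Finset.prod_univ_sum]
    rw [Fintype.piFinset_univ]
  rw [h2]
  have h3 : ∀ i : Fin k, (∑ b : Bool, (if b then v p r k i else 1 - v p r k i)) = 1 := by
    intro i
    rw [Fintype.sum_bool]
    simp
  simp [h3]

lemma Phi_mk (p r k : ℕ) [Fact p.Prime] (f : MvPolynomial (Fin k) (GaloisField p r))
    (j : Fin (2 ^ k)) :
    Phi p r k (Ideal.Quotient.mk _ f) j =
      eval₂ (RingHom.id (GaloisField p r))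
        (fun i : Fin k => if Nat.testBit (j : ℕ) (i : ℕ) then 1 else 0) f := by
  simp [Phi, PhiAux]; rfl

lemma Phi_v (p r k : ℕ) [Fact p.Prime] (i : Fin k) (j : Fin (2 ^ k)) :
    Phi p r k (v p r k i) j = if Nat.testBit (j : ℕ) (i : ℕ) then 1 else 0 := by
  rw [v, Phi_mk, eval₂_X]

lemma Phi_C (p r k : ℕ) [Fact p.Prime] (a : GaloisField p r) (j : Fin (2 ^ k)) :
    Phi p r k (Ideal.Quotient.mk _ (C a)) j = a := by
  rw [Phi_mk, eval₂_C]; rfl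

lemma mul_ee (p r k : ℕ) [Fact p.Prime] (q : B p r k) (j : Fin (2 ^ k)) :
    q * ee p r k j = Ideal.Quotient.mk _ (C (Phi p r k q j)) * ee p r k j := by
  obtain ⟨f, rfl⟩ := Ideal.Quotient.mk_surjective q
  induction f using MvPolynomial.induction_on with
  | C a => rw [Phi_C]
  | add f g hf hg =>
      rw [map_add, add_mul, hf, hg, map_add]
      rw [Pi.add_apply, map_add, map_add, add_mul]
  | mul_X f i hf =>
      have hfi : Ideal.Quotient.mk (relIdeal p r k) (f * X i) =
          Ideal.Quotient.mk _ f * v p r k i := by rw [map_mul]; rfl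
      rw [hfi, mul_assoc, v_mul_ee, ← mul_assoc, mul_comm _ (if Nat.testBit (j:ℕ) (i:ℕ) then (1 : B p r k) else 0), mul_assoc, hf, ← mul_assoc]
      congr 1
      rw [map_mul, Pi.mul_apply, Phi_v, map_mul]
      by_cases h : Nat.testBit (j : ℕ) (i : ℕ) <;> simp [h, mul_comm]

lemma Phi_inj (p r k : ℕ) [Fact p.Prime] : Function.Injective (Phi p r k) := by
  have h0 : ∀ q : B p r k, Phi p r k q = 0 → q = 0 := by
    intro q hq
    have : q = q * ∑ j, ee p r k j := by rw [sum_ee, mul_one]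
    rw [this, Finset.mul_sum]
    have hterm : ∀ j, q * ee p r k j = 0 := by
      intro j
      rw [mul_ee]
      have : Phi p r k q j = 0 := by rw [hq]; rfl
      rw [this, map_zero, map_zero, zero_mul]
    simp [hterm]
  intro a b h
  have := h0 (a - b) (by rw [map_sub, h, sub_self])
  exact sub_eq_zero.mp this

lemma Phi_ee (p r k : ℕ) [Fact p.Prime] (j j' : Fin (2 ^ k)) :
    Phi p r k (ee p r k j) j' = if j = j' then 1 else 0 := by
  unfold ee
  rw [map_prod, Finset.prod_apply]
  have hfac : ∀ i : Fin k,
      Phi p r k (if Nat.testBit (j : ℕ) (i : ℕ) then v p r k i else 1 - v p r k i) j' =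
        if Nat.testBit (j : ℕ) (i : ℕ) = Nat.testBit (j' : ℕ) (i : ℕ) then 1 else 0 := by
    intro i
    by_cases h : Nat.testBit (j : ℕ) (i : ℕ) <;>
      by_cases h' : Nat.testBit (j' : ℕ) (i : ℕ) <;>
        simp [h, h', map_sub, Pi.sub_apply, Phi_v]
  by_cases hjj : j = j'
  · subst hjj
    simp only [if_pos rfl]
    rw [Finset.prod_congr rfl (fun i _ => hfac i)]
    simp
  · rw [if_neg hjj]
    have : ∃ i : Fin k, Nat.testBit (j : ℕ) (i : ℕ) ≠ Nat.testBit (j' : ℕ) (i : ℕ) := by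
      by_contra hall
      push_neg at hall
      exact hjj (bits_inj p r k hall)
    obtain ⟨i, hi⟩ := this
    apply Finset.prod_eq_zero (Finset.mem_univ i)
    rw [hfac i, if_neg hi]

lemma Phi_surj (p r k : ℕ) [Fact p.Prime] : Function.Surjective (Phi p r k) := by
  intro c
  refine ⟨∑ j, Ideal.Quotient.mk _ (C (c j)) * ee p r k j, ?_⟩
  funext j'
  rw [map_sum, Finset.sum_apply]
  have : ∀ j : Fin (2 ^ k),
      Phi p r k (Ideal.Quotient.mk _ (C (c j)) * ee p r k j) j' =
        if j = j' then c j else 0 := by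
    intro j
    rw [map_mul, Pi.mul_apply, Phi_C, Phi_ee]
    by_cases h : j = j' <;> simp [h]
  rw [Finset.sum_congr rfl (fun j _ => this j)]
  simp

/-- Let `C = Ψ̄_k^{-1}(C_1, …, C_{2^k})` with each `C_i` an `F_{p^r}`-linear code of
length `n`.  Then `C` is Euclidean self-dual over `B_k` iff all the `C_i` are Euclidean
self-dual over `F_{p^r}`. -/
theorem stmt_17 (p r k n : ℕ) [Fact p.Prime] [NeZero n] (hr : 1 ≤ r)
    (D : Fin (2 ^ k) → Submodule (GaloisField p r) (Fin n → GaloisField p r)) :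
    {a : Fin n → B p r k | ∀ i : Fin (2 ^ k), (fun b => Phi p r k (a b) i) ∈ D i} =
        {b : Fin n → B p r k |
          ∀ c : Fin n → B p r k,
            (∀ i : Fin (2 ^ k), (fun m => Phi p r k (c m) i) ∈ D i) →
            ∑ j, b j * c j = 0} ↔
      ∀ i : Fin (2 ^ k),
        (D i : Set (Fin n → GaloisField p r)) =
          {b | ∀ c ∈ D i, ∑ j, b j * c j = 0} := by
  classical
  have hinj := Phi_inj p r k
  have hsurj := Phi_surj p r k
  -- lifting a family of vectors to a tuple over B
  have hlift : ∀ x : Fin (2 ^ k) → Fin n → GaloisField p r, ∃ a : Fin n → B p r k,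
      ∀ i b, Phi p r k (a b) i = x i b := by
    intro x
    refine ⟨fun b => Function.surjInv hsurj (fun i => x i b), fun i b => ?_⟩
    exact congrFun (Function.surjInv_eq hsurj (fun i => x i b)) i
  -- inner products transfer coordinatewise
  have hdot : ∀ b c : Fin n → B p r k,
      (∑ j, b j * c j = 0) ↔
        ∀ i : Fin (2 ^ k), ∑ j, Phi p r k (b j) i * Phi p r k (c j) i = 0 := by
    intro b c
    constructor
    · intro h i
      have h1 : Phi p r k (∑ j, b j * c j) = 0 := by rw [h, map_zero]
      have h2 := congrFun h1 i
      simpa [map_sum, map_mul, Finset.sum_apply, Pi.mul_apply] using h2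
    · intro h
      apply hinj
      rw [map_zero]
      funext i
      simpa [map_sum, map_mul, Finset.sum_apply, Pi.mul_apply] using h i
  constructor
  · intro hC
    have hC' := Set.ext_iff.mp hC
    simp only [Set.mem_setOf_eq] at hC'
    intro i₀
    ext x
    simp only [SetLike.mem_coe, Set.mem_setOf_eq]
    constructor
    · intro hx c hc
      obtain ⟨a, ha⟩ := hlift (fun i => if i = i₀ then x else 0)
      obtain ⟨c', hc'⟩ := hlift (fun i => if i = i₀ then c else 0)
      have haL : ∀ i : Fin (2 ^ k), (fun b => Phi p r k (a b) i) ∈ D i := by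
        intro i
        have : (fun b => Phi p r k (a b) i) = if i = i₀ then x else 0 := funext (ha i)
        rw [this]
        by_cases h : i = i₀
        · rw [if_pos h, h]; exact hx
        · rw [if_neg h]; exact (D i).zero_mem
      have hc'L : ∀ i : Fin (2 ^ k), (fun m => Phi p r k (c' m) i) ∈ D i := by
        intro i
        have : (fun m => Phi p r k (c' m) i) = if i = i₀ then c else 0 := funext (hc' i)
        rw [this]
        by_cases h : i = i₀
        · rw [if_pos h, h]; exact hc
        · rw [if_neg h]; exact (D i).zero_mem
      have haR := (hC' a).mp haL c' hc'L
      have := (hdot a c').mp haR i₀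
      simpa [ha, hc'] using this
    · intro hx
      obtain ⟨a, ha⟩ := hlift (fun i => if i = i₀ then x else 0)
      have haR : ∀ c : Fin n → B p r k,
          (∀ i : Fin (2 ^ k), (fun m => Phi p r k (c m) i) ∈ D i) →
            ∑ j, a j * c j = 0 := by
        intro c hc
        refine (hdot a c).mpr fun i => ?_
        by_cases h : i = i₀
        · subst h
          have hmem : (fun m => Phi p r k (c m) i) ∈ D i := hc i
          have := hx _ hmem
          simpa [ha] using this
        · have : ∀ j, Phi p r k (a j) i = 0 := by
            intro j; rw [ha i j, if_neg h]; rfl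
          simp [this]
      have := (hC' a).mpr haR i₀
      have heq : (fun b => Phi p r k (a b) i₀) = x := by
        funext b; rw [ha i₀ b, if_pos rfl]
      rwa [heq] at this
  · intro hD
    ext a
    simp only [Set.mem_setOf_eq]
    constructor
    · intro ha c hc
      refine (hdot a c).mpr fun i => ?_
      have hxa : (fun b => Phi p r k (a b) i) ∈
          {b : Fin n → GaloisField p r | ∀ c ∈ D i, ∑ j, b j * c j = 0} := by
        rw [← hD i]; exact ha i
      exact hxa _ (hc i)
    · intro ha i₀
      have hgoal : (fun b => Phi p r k (a b) i₀) ∈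
          {b : Fin n → GaloisField p r | ∀ c ∈ D i₀, ∑ j, b j * c j = 0} := by
        intro c hc
        obtain ⟨c', hc'⟩ := hlift (fun i => if i = i₀ then c else 0)
        have hc'L : ∀ i : Fin (2 ^ k), (fun m => Phi p r k (c' m) i) ∈ D i := by
          intro i
          have : (fun m => Phi p r k (c' m) i) = if i = i₀ then c else 0 := funext (hc' i)
          rw [this]
          by_cases h : i = i₀
          · rw [if_pos h, h]; exact hc
          · rw [if_neg h]; exact (D i).zero_mem
        have := (hdot a c').mp (ha c' hc'L) i₀
        simpa [hc'] using this
      have : (fun b => Phi p r k (a b) i₀) ∈ (D i₀ : Set (Fin n → GaloisField p r)) := by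
        rw [hD i₀]; exact hgoal
      exact this
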